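/- Let p be prime, Γ = Z × (Z/pZ), and F a finite subset of Γ that is not of the form F̃ × (Z/pZ) for any finite F̃ ⊆ Z. Then every co-tile A of F (a set with F ⊕ A = Γ) is periodic, i.e., there exists γ ∈ Γ of infinite order with γ + A = A. -/

import Mathlib

/-- `F ⊕ A = G`: every element of `G` has a unique representation `f + a`,
`f ∈ F`, `a ∈ A`. -/
def Tiles {G : Type*} [AddCommGroup G] (F : Finset G) (A : Set G) : Prop :=
  ∀ z : G, ∃! q : G × G, q.1 ∈ F ∧ q.2 ∈ A ∧ q.1 + q.2 = z

namespace Stmt15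

open Finset Polynomial

variable {p : ℕ} [hp : Fact p.Prime]

noncomputable def psi (p : ℕ) (ζ : ℂ) (x : ZMod p) : ℂ := ζ ^ x.val

lemma pow_val_mod {ζ : ℂ} (hζ : IsPrimitiveRoot ζ p) (a : ℕ) : ζ ^ (a % p) = ζ ^ a := by
  rw [show p = orderOf ζ from hζ.eq_orderOf]; exact pow_mod_orderOf ζ a

lemma psi_add {ζ : ℂ} (hζ : IsPrimitiveRoot ζ p) (x y : ZMod p) :
    psi p ζ (x + y) = psi p ζ x * psi p ζ y := by
  unfold psi
  rw [ZMod.val_add, pow_val_mod hζ, pow_add]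

lemma psi_mul {ζ : ℂ} (hζ : IsPrimitiveRoot ζ p) (x y : ZMod p) :
    psi p ζ (x * y) = (ζ ^ x.val) ^ y.val := by
  unfold psi
  rw [ZMod.val_mul, pow_val_mod hζ, pow_mul]

lemma psi_zero (ζ : ℂ) : psi p ζ 0 = 1 := by
  unfold psi
  rw [ZMod.val_zero, pow_zero]

lemma sum_psi {ζ : ℂ} (hζ : IsPrimitiveRoot ζ p) : ∑ y : ZMod p, psi p ζ y = 0 := by
  have h1 : ∑ y : ZMod p, psi p ζ y = ∑ i ∈ range p, ζ ^ i := by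
    unfold psi
    exact Finset.sum_nbij' (fun y => y.val) (fun i => (i : ZMod p))
      (fun a _ => mem_range.2 (ZMod.val_lt a)) (fun a _ => mem_univ _)
      (fun a _ => by simp [ZMod.natCast_val, ZMod.cast_id])
      (fun a ha => ZMod.val_cast_of_lt (mem_range.1 ha)) (fun a _ => rfl)
  rw [h1]
  exact hζ.geom_sum_eq_zero hp.out.one_lt

lemma sum_psi_mul {ζ : ℂ} (hζ : IsPrimitiveRoot ζ p) (d : ZMod p) :
    ∑ x : ZMod p, psi p ζ (x * d) = if d = 0 then (p : ℂ) else 0 := by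
  by_cases hd : d = 0
  · simp [hd, psi_zero, ZMod.card]
  · rw [if_neg hd]
    have : ∑ x : ZMod p, psi p ζ (x * d) = ∑ y : ZMod p, psi p ζ y := by
      apply Fintype.sum_bijective (fun x : ZMod p => x * d)
      · exact (mulRight_bijective₀ d hd)
      · intro x; rfl
    rw [this]; exact sum_psi hζ

lemma sum_pow_ne_zero {ξ : ℂ} (hξ : IsPrimitiveRoot ξ p) (B : Finset (ZMod p))
    (hB1 : B.Nonempty) (hB2 : B ≠ univ) : ∑ t ∈ B, ξ ^ t.val ≠ 0 := by
  intro h0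
  classical
  set Q : ℚ[X] := ∑ t ∈ B, X ^ t.val with hQdef
  have hcoeff : ∀ k : ℕ, k < p → Q.coeff k = if ((k : ZMod p) ∈ B) then 1 else 0 := by
    intro k hk
    rw [hQdef, finset_sum_coeff]
    have : ∀ t ∈ B, (X ^ t.val : ℚ[X]).coeff k = if t = (k : ZMod p) then 1 else 0 := by
      intro t _
      rw [coeff_X_pow]
      congr 1
      simp only [eq_iff_iff]
      constructor
      · intro h
        have : ((t.val : ℕ) : ZMod p) = (k : ZMod p) := by rw [h]
        simpa [ZMod.natCast_val, ZMod.cast_id] using this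
      · intro h
        rw [h, ZMod.val_cast_of_lt hk]
    rw [Finset.sum_congr rfl this, Finset.sum_ite_eq' B ((k : ZMod p)) (fun _ => (1:ℚ))]
  have haev : aeval ξ Q = 0 := by
    rw [hQdef]
    simpa using h0
  have hdvd : cyclotomic p ℚ ∣ Q := by
    rw [cyclotomic_eq_minpoly_rat hξ hp.out.pos]
    exact minpoly.dvd ℚ ξ haev
  obtain ⟨t1, ht1⟩ := hB1
  obtain ⟨t2, ht2⟩ : ∃ t, t ∉ B := by
    by_contra h
    push_neg at h
    exact hB2 (Finset.eq_univ_iff_forall.2 h)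
  have hQ1 : Q.coeff t1.val = 1 := by
    rw [hcoeff _ (ZMod.val_lt t1)]; simp [ZMod.natCast_val, ZMod.cast_id, ht1]
  have hQ2 : Q.coeff t2.val = 0 := by
    rw [hcoeff _ (ZMod.val_lt t2)]; simp [ZMod.natCast_val, ZMod.cast_id, ht2]
  obtain ⟨q, hq⟩ := hdvd
  have hQne : Q ≠ 0 := fun h => by simp [h] at hQ1
  have hqne : q ≠ 0 := fun h => by simp [h, hq] at hQne
  have hdegQ : Q.natDegree ≤ p - 1 := by
    apply Polynomial.natDegree_sum_le_of_forall_le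
    intro t _
    rw [natDegree_X_pow]
    have := ZMod.val_lt t
    omega
  have hdegc : (cyclotomic p ℚ).natDegree = p - 1 := by
    rw [natDegree_cyclotomic, Nat.totient_prime hp.out]
  have hdegq : q.natDegree = 0 := by
    have := Polynomial.natDegree_mul (cyclotomic_ne_zero p ℚ) hqne
    rw [← hq, hdegc] at this
    omega
  obtain ⟨c, hc⟩ : ∃ c : ℚ, q = C c := ⟨q.coeff 0, (Polynomial.eq_C_of_natDegree_eq_zero hdegq)⟩
  have hcyccoeff : ∀ k, k < p → (cyclotomic p ℚ).coeff k = 1 := by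
    intro k hk
    rw [cyclotomic_prime, finset_sum_coeff]
    have : ∀ i ∈ range p, (X ^ i : ℚ[X]).coeff k = if i = k then 1 else 0 :=
      fun i _ => by rw [coeff_X_pow]; simp [eq_comm]
    rw [Finset.sum_congr rfl this, Finset.sum_ite_eq' (range p) k (fun _ => (1:ℚ)),
      if_pos (mem_range.2 hk)]
  have key : ∀ k, k < p → Q.coeff k = c := by
    intro k hk
    rw [hq, hc, coeff_mul_C, hcyccoeff k hk, one_mul]
  have h1 : c = 1 := by rw [← key t1.val (ZMod.val_lt t1), hQ1]
  have h2 : c = 0 := by rw [← key t2.val (ZMod.val_lt t2), hQ2]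
  rw [h1] at h2
  exact one_ne_zero h2

lemma col_inversion {ζ : ℂ} (hζ : IsPrimitiveRoot ζ p) (B C : Finset (ZMod p))
    (h : ∀ χ : ZMod p, ∑ y ∈ B, psi p ζ (χ * y) = ∑ y ∈ C, psi p ζ (χ * y)) : B = C := by
  classical
  have key : ∀ (D : Finset (ZMod p)) (y0 : ZMod p),
      ∑ χ : ZMod p, psi p ζ (χ * (-y0)) * ∑ y ∈ D, psi p ζ (χ * y)
        = if y0 ∈ D then (p : ℂ) else 0 := by
    intro D y0
    have h1 : ∀ χ : ZMod p, psi p ζ (χ * (-y0)) * ∑ y ∈ D, psi p ζ (χ * y)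
        = ∑ y ∈ D, psi p ζ (χ * (y - y0)) := by
      intro χ
      rw [mul_sum]
      apply Finset.sum_congr rfl
      intro y _
      rw [← psi_add hζ]
      congr 1
      ring
    rw [Finset.sum_congr rfl (fun χ _ => h1 χ), Finset.sum_comm]
    have h2 : ∀ y ∈ D, ∑ χ : ZMod p, psi p ζ (χ * (y - y0)) = if y - y0 = 0 then (p:ℂ) else 0 :=
      fun y _ => sum_psi_mul hζ (y - y0)
    rw [Finset.sum_congr rfl h2]
    have h3 : ∀ y ∈ D, (if y - y0 = 0 then (p:ℂ) else 0) = if y = y0 then (p:ℂ) else 0 := by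
      intro y _; simp [sub_eq_zero]
    rw [Finset.sum_congr rfl h3, Finset.sum_ite_eq' D y0 (fun _ => (p:ℂ))]
  have hp0 : (p : ℂ) ≠ 0 := Nat.cast_ne_zero.2 hp.out.ne_zero
  apply Finset.ext
  intro y0
  have e := key B y0
  rw [Finset.sum_congr rfl (fun χ _ => by rw [h χ]), key C y0] at e
  by_cases h1 : y0 ∈ B <;> by_cases h2 : y0 ∈ C <;> simp [h1, h2] at e ⊢
  · exact hp0 e.symm
  · exact hp.out.ne_zero e

/-- Forward determinism from a two-sided linear recurrence. -/
lemma det (S : Finset ℤ) (w : ℤ → ℂ) (a b : ℤ → ℂ) (c : ℂ) (D : ℕ)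
    (hD : ∀ s ∈ S, ∀ s' ∈ S, s - s' ≤ (D : ℤ))
    (ha : ∀ n : ℤ, ∑ s ∈ S, w s * a (n - s) = c)
    (hb : ∀ n : ℤ, ∑ s ∈ S, w s * b (n - s) = c)
    (hw : ∃ s ∈ S, w s ≠ 0)
    (n m : ℤ) (h : ∀ k : ℕ, 1 ≤ k → k ≤ D → a (n - k) = b (m - k)) : a n = b m := by
  classical
  set T := S.filter (fun s => w s ≠ 0) with hT
  obtain ⟨sw, hswS, hsww⟩ := hw
  have hTne : T.Nonempty := ⟨sw, mem_filter.2 ⟨hswS, hsww⟩⟩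
  set s0 := T.min' hTne with hs0
  have hs0T : s0 ∈ T := T.min'_mem hTne
  have hs0S : s0 ∈ S := (mem_filter.1 hs0T).1
  have hws0 : w s0 ≠ 0 := (mem_filter.1 hs0T).2
  have key : ∑ s ∈ S, w s * (a (n + s0 - s) - b (m + s0 - s)) = 0 := by
    have e1 := ha (n + s0)
    have e2 := hb (m + s0)
    calc ∑ s ∈ S, w s * (a (n + s0 - s) - b (m + s0 - s))
        = (∑ s ∈ S, w s * a (n + s0 - s)) - ∑ s ∈ S, w s * b (m + s0 - s) := by
          rw [← Finset.sum_sub_distrib]; apply Finset.sum_congr rfl; intro s _; ring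
      _ = c - c := by rw [e1, e2]
      _ = 0 := sub_self c
  rw [Finset.sum_eq_single_of_mem s0 hs0S] at key
  · have : a (n + s0 - s0) - b (m + s0 - s0) = 0 := by
      rcases mul_eq_zero.1 key with h' | h'
      · exact absurd h' hws0
      · exact h'
    have e : n + s0 - s0 = n := by ring
    have e' : m + s0 - s0 = m := by ring
    rw [e, e'] at this
    exact sub_eq_zero.1 this
  · intro s hs hne
    by_cases hws : w s = 0
    · rw [hws, zero_mul]
    · have hsT : s ∈ T := mem_filter.2 ⟨hs, hws⟩
      have h1 : s0 ≤ s := T.min'_le s hsT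
      have h2 : s0 < s := lt_of_le_of_ne h1 (Ne.symm hne)
      set k := (s - s0).toNat with hk
      have hkk : (k : ℤ) = s - s0 := Int.toNat_of_nonneg (by omega)
      have hDs := hD s hs s0 hs0S
      have hk1 : 1 ≤ k := by omega
      have hk2 : k ≤ D := by omega
      have e1 : n + s0 - s = n - k := by omega
      have e2 : m + s0 - s = m - k := by omega
      rw [e1, e2, h k hk1 hk2, sub_self, mul_zero]

/-- Backward determinism, by reflecting `det`. -/
lemma det' (S : Finset ℤ) (w : ℤ → ℂ) (a b : ℤ → ℂ) (c : ℂ) (D : ℕ)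
    (hD : ∀ s ∈ S, ∀ s' ∈ S, s - s' ≤ (D : ℤ))
    (ha : ∀ n : ℤ, ∑ s ∈ S, w s * a (n - s) = c)
    (hb : ∀ n : ℤ, ∑ s ∈ S, w s * b (n - s) = c)
    (hw : ∃ s ∈ S, w s ≠ 0)
    (n m : ℤ) (h : ∀ k : ℕ, 1 ≤ k → k ≤ D → a (n + k) = b (m + k)) : a n = b m := by
  classical
  have hinj : ∀ x ∈ S, ∀ y ∈ S, -x = -y → x = y := fun x _ y _ h => neg_injective h
  have key := det (S.image (fun s => -s)) (fun s => w (-s)) (fun x => a (-x)) (fun x => b (-x)) c D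
    (by
      intro s hs s' hs'
      obtain ⟨u, hu, rfl⟩ := mem_image.1 hs
      obtain ⟨v, hv, rfl⟩ := mem_image.1 hs'
      have := hD v hv u hu
      omega)
    (by
      intro n'
      rw [Finset.sum_image hinj]
      have : ∀ s ∈ S, w (- -s) * a (-(n' - -s)) = w s * a (-n' - s) := by
        intro s _
        rw [neg_neg]
        congr 2
        ring
      rw [Finset.sum_congr rfl this]
      exact ha (-n'))
    (by
      intro n'
      rw [Finset.sum_image hinj]
      have : ∀ s ∈ S, w (- -s) * b (-(n' - -s)) = w s * b (-n' - s) := by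
        intro s _
        rw [neg_neg]
        congr 2
        ring
      rw [Finset.sum_congr rfl this]
      exact hb (-n'))
    (by
      obtain ⟨s, hs, hws⟩ := hw
      exact ⟨-s, mem_image_of_mem _ hs, by simpa using hws⟩)
    (-n) (-m)
    (by
      intro k hk1 hk2
      have e1 : -(-n - (k:ℤ)) = n + k := by ring
      have e2 : -(-m - (k:ℤ)) = m + k := by ring
      simp only [e1, e2]
      exact h k hk1 hk2)
  simpa using key

noncomputable def colA (A : Set (ℤ × ZMod p)) (n : ℤ) : Finset (ZMod p) :=
  @Finset.filter _ (fun y => (n, y) ∈ A) (Classical.decPred _) Finset.univ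

lemma mem_colA {A : Set (ℤ × ZMod p)} {n : ℤ} {y : ZMod p} : y ∈ colA A n ↔ (n, y) ∈ A := by
  simp [colA]

noncomputable def acoef (ζ : ℂ) (A : Set (ℤ × ZMod p)) (n : ℤ) (χ : ZMod p) : ℂ :=
  ∑ y ∈ colA A n, psi p ζ (χ * y)

noncomputable def fibF (F : Finset (ℤ × ZMod p)) (s : ℤ) : Finset (ZMod p) :=
  (F.filter (fun f => f.1 = s)).image Prod.snd

noncomputable def wF (ζ : ℂ) (F : Finset (ℤ × ZMod p)) (s : ℤ) (χ : ZMod p) : ℂ :=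
  ∑ t ∈ fibF F s, psi p ζ (χ * t)

lemma count_one {F : Finset (ℤ × ZMod p)} {A : Set (ℤ × ZMod p)} (hA : Tiles F A)
    (z : ℤ × ZMod p) :
    (@Finset.filter _ (fun f => z - f ∈ A) (Classical.decPred _) F) = {(hA z).choose.1} := by
  classical
  obtain ⟨⟨hqF, hqA, hqs⟩, hu⟩ := (hA z).choose_spec
  set q := (hA z).choose
  ext f
  simp only [Finset.mem_filter, Finset.mem_singleton]
  constructor
  · rintro ⟨hf, hfa⟩
    have : (f, z - f) = q := hu (f, z - f) ⟨hf, hfa, add_sub_cancel f z⟩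
    rw [← this]
  · rintro rfl
    refine ⟨hqF, ?_⟩
    have : z - q.1 = q.2 := by rw [← hqs]; ring
    rw [this]
    exact hqA

lemma star {ζ : ℂ} (hζ : IsPrimitiveRoot ζ p) {F : Finset (ℤ × ZMod p)}
    {A : Set (ℤ × ZMod p)} (hA : Tiles F A) (n : ℤ) (χ : ZMod p) :
    ∑ s ∈ F.image Prod.fst, wF ζ F s χ * acoef ζ A (n - s) χ
      = if χ = 0 then (p : ℂ) else 0 := by
  classical
  have step1 : ∑ s ∈ F.image Prod.fst, wF ζ F s χ * acoef ζ A (n - s) χ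
      = ∑ f ∈ F, psi p ζ (χ * f.2) * acoef ζ A (n - f.1) χ := by
    rw [← Finset.sum_fiberwise_of_maps_to (g := Prod.fst)
      (fun f hf => mem_image_of_mem _ hf)
      (fun f => psi p ζ (χ * f.2) * acoef ζ A (n - f.1) χ)]
    apply Finset.sum_congr rfl
    intro s hs
    have e1 : ∀ f ∈ F.filter (fun f => f.1 = s),
        psi p ζ (χ * f.2) * acoef ζ A (n - f.1) χ
          = psi p ζ (χ * f.2) * acoef ζ A (n - s) χ := by
      intro f hf
      rw [(mem_filter.1 hf).2]
    rw [Finset.sum_congr rfl e1, ← Finset.sum_mul]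
    congr 1
    rw [wF, fibF, Finset.sum_image]
    intro f hf g hg hfg
    have h1 : f.1 = s := (mem_filter.1 hf).2
    have h2 : g.1 = s := (mem_filter.1 hg).2
    exact Prod.ext (h1.trans h2.symm) hfg
  rw [step1]
  have step2 : ∀ f ∈ F, psi p ζ (χ * f.2) * acoef ζ A (n - f.1) χ
      = ∑ u : ZMod p, if ((n, u) - f ∈ A) then psi p ζ (χ * u) else 0 := by
    intro f _
    rw [acoef, mul_sum]
    have e1 : ∀ y ∈ colA A (n - f.1),
        psi p ζ (χ * f.2) * psi p ζ (χ * y) = psi p ζ (χ * (f.2 + y)) := by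
      intro y _
      rw [← psi_add hζ, mul_add]
    rw [Finset.sum_congr rfl e1]
    have e2 : ∑ y ∈ colA A (n - f.1), psi p ζ (χ * (f.2 + y))
        = ∑ u ∈ (colA A (n - f.1)).image (fun y => f.2 + y), psi p ζ (χ * u) := by
      rw [Finset.sum_image (fun x _ y _ h => by exact add_left_cancel h)]
    rw [e2]
    have e3 : (colA A (n - f.1)).image (fun y => f.2 + y)
        = @Finset.filter _ (fun u => (n, u) - f ∈ A) (Classical.decPred _) Finset.univ := by
      ext u
      simp only [Finset.mem_image, Finset.mem_filter, Finset.mem_univ, true_and, mem_colA]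
      constructor
      · rintro ⟨y, hy, rfl⟩
        have : (n, f.2 + y) - f = (n - f.1, y) := by
          apply Prod.ext <;> simp
        rw [this]
        exact hy
      · intro hu
        refine ⟨u - f.2, ?_, by ring⟩
        have : (n, u) - f = (n - f.1, u - f.2) := by
          apply Prod.ext <;> simp
        rwa [this] at hu
    rw [e3, Finset.sum_filter]
  rw [Finset.sum_congr rfl step2, Finset.sum_comm]
  have step3 : ∀ u : ZMod p,
      (∑ f ∈ F, if ((n, u) - f ∈ A) then psi p ζ (χ * u) else 0) = psi p ζ (χ * u) := by
    intro u
    rw [← Finset.sum_filter, Finset.sum_const, count_one hA (n, u)]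
    simp
  rw [Finset.sum_congr rfl (fun u _ => step3 u)]
  have : ∀ u : ZMod p, psi p ζ (χ * u) = psi p ζ (u * χ) := fun u => by rw [mul_comm]
  rw [Finset.sum_congr rfl (fun u _ => this u)]
  exact sum_psi_mul hζ χ

lemma wF_ne {ζ : ℂ} (hζ : IsPrimitiveRoot ζ p) {F : Finset (ℤ × ZMod p)} (hFne : F.Nonempty)
    (hF : ¬ ∃ Ft : Finset ℤ, F = Ft ×ˢ (Finset.univ : Finset (ZMod p))) (χ : ZMod p) :
    ∃ s ∈ F.image Prod.fst, wF ζ F s χ ≠ 0 := by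
  classical
  have hfib : ∀ s ∈ F.image Prod.fst, (fibF F s).Nonempty := by
    intro s hs
    obtain ⟨f, hf, rfl⟩ := mem_image.1 hs
    exact ⟨f.2, mem_image_of_mem _ (mem_filter.2 ⟨hf, rfl⟩)⟩
  by_cases hχ : χ = 0
  · obtain ⟨f, hf⟩ := hFne
    refine ⟨f.1, mem_image_of_mem _ hf, ?_⟩
    rw [hχ, wF]
    have h1 : ∀ t ∈ fibF F f.1, psi p ζ (0 * t) = 1 := fun t _ => by rw [zero_mul, psi_zero]
    rw [Finset.sum_congr rfl h1, Finset.sum_const, nsmul_eq_mul, mul_one]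
    exact Nat.cast_ne_zero.2 (Finset.card_ne_zero.2 (hfib f.1 (mem_image_of_mem _ hf)))
  · have hproper : ∃ s ∈ F.image Prod.fst, fibF F s ≠ Finset.univ := by
      by_contra hcon
      push_neg at hcon
      apply hF
      refine ⟨F.image Prod.fst, ?_⟩
      ext f
      simp only [Finset.mem_product, Finset.mem_univ, and_true]
      constructor
      · intro hfF
        exact mem_image_of_mem _ hfF
      · intro hf1
        have : f.2 ∈ fibF F f.1 := by rw [hcon f.1 hf1]; exact mem_univ _
        obtain ⟨g, hg, hg2⟩ := mem_image.1 this
        have hg1 : g.1 = f.1 := (mem_filter.1 hg).2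
        have hgf : g = f := Prod.ext hg1 hg2
        rw [← hgf]
        exact (mem_filter.1 hg).1
    obtain ⟨s, hs, hsne⟩ := hproper
    refine ⟨s, hs, ?_⟩
    rw [wF]
    have hval : χ.val ≠ 0 := fun h => hχ ((ZMod.val_eq_zero χ).1 h)
    have hlt : χ.val < p := ZMod.val_lt χ
    have hcop : χ.val.Coprime p := by
      apply Nat.Coprime.symm
      apply (Nat.Prime.coprime_iff_not_dvd hp.out).2
      intro hdvd
      have := Nat.le_of_dvd (Nat.pos_of_ne_zero hval) hdvd
      omega
    have hxi := hζ.pow_of_coprime χ.val hcop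
    have heq : ∀ t ∈ fibF F s, psi p ζ (χ * t) = (ζ ^ χ.val) ^ t.val :=
      fun t _ => psi_mul hζ χ t
    rw [Finset.sum_congr rfl heq]
    exact sum_pow_ne_zero hxi _ (hfib s hs) hsne

end Stmt15

theorem stmt_15 (p : ℕ) [Fact p.Prime] (F : Finset (ℤ × ZMod p))
    (hF : ¬ ∃ Ft : Finset ℤ, F = Ft ×ˢ (Finset.univ : Finset (ZMod p))) :
    ∀ A : Set (ℤ × ZMod p), Tiles F A →
      ∃ γ : ℤ × ZMod p, addOrderOf γ = 0 ∧ ∀ a : ℤ × ZMod p, a + γ ∈ A ↔ a ∈ A := by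
  intro A hA
  classical
  open Finset Stmt15 in
  have hp' : p.Prime := Fact.out
  set ζ : ℂ := Complex.exp (2 * Real.pi * Complex.I / p) with hζdef
  have hζ : IsPrimitiveRoot ζ p := Complex.isPrimitiveRoot_exp p hp'.ne_zero
  have hFne : F.Nonempty := by
    obtain ⟨q, ⟨hqF, _, _⟩, _⟩ := hA 0
    exact ⟨q.1, hqF⟩
  set S := F.image Prod.fst with hSdef
  have hSne : S.Nonempty := hFne.image _
  set D : ℕ := ((S.max' hSne) - (S.min' hSne)).toNat + 1 with hDdef
  have hDbound : ∀ s ∈ S, ∀ s' ∈ S, s - s' ≤ (D : ℤ) := by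
    intro s hs s' hs'
    have h1 := S.le_max' s hs
    have h2 := S.min'_le s' hs'
    have h3 : (S.max' hSne) - (S.min' hSne) ≤ (((S.max' hSne) - (S.min' hSne)).toNat : ℤ) :=
      Int.self_le_toNat _
    omega
  have hwex : ∀ χ : ZMod p, ∃ s ∈ S, wF ζ F s χ ≠ 0 := fun χ => wF_ne hζ hFne hF χ
  have hstar : ∀ (χ : ZMod p) (n : ℤ),
      ∑ s ∈ S, wF ζ F s χ * acoef ζ A (n - s) χ = if χ = 0 then (p : ℂ) else 0 :=
    fun χ n => star hζ hA n χ
  have colfwd : ∀ n m : ℤ,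
      (∀ k : ℕ, 1 ≤ k → k ≤ D → colA A (n - k) = colA A (m - k)) → colA A n = colA A m := by
    intro n m h
    apply col_inversion hζ
    intro χ
    exact det S (fun s => wF ζ F s χ) (fun x => acoef ζ A x χ) (fun x => acoef ζ A x χ)
      _ D hDbound (hstar χ) (hstar χ) (hwex χ) n m
      (fun k h1 h2 => by
        show acoef ζ A (n - k) χ = acoef ζ A (m - k) χ
        unfold acoef
        rw [h k h1 h2])
  have colbwd : ∀ n m : ℤ,
      (∀ k : ℕ, 1 ≤ k → k ≤ D → colA A (n + k) = colA A (m + k)) → colA A n = colA A m := by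
    intro n m h
    apply col_inversion hζ
    intro χ
    exact det' S (fun s => wF ζ F s χ) (fun x => acoef ζ A x χ) (fun x => acoef ζ A x χ)
      _ D hDbound (hstar χ) (hstar χ) (hwex χ) n m
      (fun k h1 h2 => by
        show acoef ζ A (n + k) χ = acoef ζ A (m + k) χ
        unfold acoef
        rw [h k h1 h2])
  have pig : ∃ (x y : ℕ), x < y ∧
      ∀ k : ℕ, k < D → colA A ((x : ℤ) + k) = colA A ((y : ℤ) + k) := by
    obtain ⟨x, y, hxy, hW⟩ := Finite.exists_ne_map_eq_of_infinite
      (fun (j : ℕ) => fun (k : Fin D) => colA A ((j : ℤ) + (k : ℕ)))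
    rcases lt_or_gt_of_ne hxy with h | h
    · exact ⟨x, y, h, fun k hk => congrFun hW ⟨k, hk⟩⟩
    · exact ⟨y, x, h, fun k hk => (congrFun hW ⟨k, hk⟩).symm⟩
  obtain ⟨x, y, hxy, hbase⟩ := pig
  set N : ℤ := (y : ℤ) - (x : ℤ) with hNdef
  have hNpos : 0 < N := by omega
  have key : ∀ z : ℤ, ∀ k : ℕ, k < D →
      colA A ((x : ℤ) + z + k) = colA A ((x : ℤ) + z + N + k) := by
    intro z
    induction z using Int.induction_on with
    | zero =>
      intro k hk
      have e1 : (x : ℤ) + 0 + (k : ℤ) = (x : ℤ) + (k : ℤ) := by ring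
      have e2 : (x : ℤ) + 0 + N + (k : ℤ) = (y : ℤ) + (k : ℤ) := by omega
      rw [e1, e2]
      exact hbase k hk
    | succ i ih =>
      intro k hk
      by_cases hk1 : k + 1 < D
      · have := ih (k + 1) hk1
        have e1 : (x : ℤ) + ((i : ℤ) + 1) + (k : ℤ) = (x : ℤ) + (i : ℤ) + ((k + 1 : ℕ) : ℤ) := by
          push_cast; ring
        have e2 : (x : ℤ) + ((i : ℤ) + 1) + N + (k : ℤ)
            = (x : ℤ) + (i : ℤ) + N + ((k + 1 : ℕ) : ℤ) := by push_cast; ring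
        rw [e1, e2]
        exact this
      · apply colfwd
        intro k' h1 h2
        have := ih (D - k') (by omega)
        have e1 : (x : ℤ) + ((i : ℤ) + 1) + (k : ℤ) - (k' : ℤ)
            = (x : ℤ) + (i : ℤ) + ((D - k' : ℕ) : ℤ) := by omega
        have e2 : (x : ℤ) + ((i : ℤ) + 1) + N + (k : ℤ) - (k' : ℤ)
            = (x : ℤ) + (i : ℤ) + N + ((D - k' : ℕ) : ℤ) := by omega
        rw [e1, e2]
        exact this
    | pred i ih =>
      intro k hk
      by_cases hk1 : 1 ≤ k
      · have := ih (k - 1) (by omega)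
        have e1 : (x : ℤ) + (-(i : ℤ) - 1) + (k : ℤ) = (x : ℤ) + (-(i : ℤ)) + ((k - 1 : ℕ) : ℤ) := by
          omega
        have e2 : (x : ℤ) + (-(i : ℤ) - 1) + N + (k : ℤ)
            = (x : ℤ) + (-(i : ℤ)) + N + ((k - 1 : ℕ) : ℤ) := by omega
        rw [e1, e2]
        exact this
      · apply colbwd
        intro k' h1 h2
        have := ih (k' - 1) (by omega)
        have e1 : (x : ℤ) + (-(i : ℤ) - 1) + (k : ℤ) + (k' : ℤ)
            = (x : ℤ) + (-(i : ℤ)) + ((k' - 1 : ℕ) : ℤ) := by omega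
        have e2 : (x : ℤ) + (-(i : ℤ) - 1) + N + (k : ℤ) + (k' : ℤ)
            = (x : ℤ) + (-(i : ℤ)) + N + ((k' - 1 : ℕ) : ℤ) := by omega
        rw [e1, e2]
        exact this
  have hshift : ∀ u : ℤ, colA A u = colA A (u + N) := by
    intro u
    have := key (u - x) 0 (by omega)
    have e1 : (x : ℤ) + (u - (x : ℤ)) + ((0 : ℕ) : ℤ) = u := by omega
    have e2 : (x : ℤ) + (u - (x : ℤ)) + N + ((0 : ℕ) : ℤ) = u + N := by omega
    rwa [e1, e2] at this
  refine ⟨(N, 0), ?_, ?_⟩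
  · rw [addOrderOf_eq_zero_iff']
    intro k hk hcon
    have h1 : k • N = 0 := by
      have := congrArg Prod.fst hcon
      simpa using this
    rw [nsmul_eq_mul] at h1
    rcases mul_eq_zero.1 h1 with h' | h'
    · have : k = 0 := by exact_mod_cast h'
      omega
    · omega
  · rintro ⟨u, v⟩
    have e : (u, v) + ((N : ℤ), (0 : ZMod p)) = (u + N, v) := by
      simp [Prod.ext_iff]
    rw [e, ← mem_colA, ← mem_colA, ← hshift u]
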